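/- Suppose A_1, …, A_m ∈ M_n are Hermitian matrices such that A_j = A_{j1} ⊕ … ⊕ A_{jr} ∈ M_{n_1} ⊕ … ⊕ M_{n_r} for each j, where n_1 + … + n_r = n. Let k be an integer with 1 ≤ k ≤ n−1 and let 𝓦 = ⋃ {W_{k_1}(A_{11}, …, A_{m1}) + … + W_{k_r}(A_{1r}, …, A_{mr}) : k_1, …, k_r ≥ 0 integers with Σ_{j=1}^r k_j = k}, with the convention that W_0(B_1, …, B_q) = {(0, …, 0)} for any matrices B_1, …, B_q, and where + denotes Minkowski sum. Then W_k(A_1, …, A_m) ⊆ conv 𝓦 = conv W_k(A_1, …, A_m). -/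

import Mathlib

open Matrix

/-- The joint `k`-numerical range of a tuple of Hermitian matrices, regarded as a
subset of `ℝ^m`:
`W_k(A_1, …, A_m) = {(tr(A₁P), …, tr(AₘP)) : P an orthogonal projection of rank k}`.
(For `k = 0` this is the singleton `{0}`, matching the convention `W₀ = {(0,…,0)}`.) -/
noncomputable def jointKNumRangeR {ι : Type*} [Fintype ι] [DecidableEq ι] {m : ℕ}
    (k : ℕ) (A : Fin m → Matrix ι ι ℂ) : Set (Fin m → ℝ) :=
  { p | ∃ P : Matrix ι ι ℂ, P.IsHermitian ∧ P * P = P ∧ P.rank = k ∧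
      ∀ j, (p j : ℂ) = (A j * P).trace }

open scoped ComplexOrder

section Aux

variable {n : Type*} [Fintype n] [DecidableEq n]

lemma aux_dot_self_eig {B : Matrix n n ℂ} (hB : B.IsHermitian) (l : n) :
    star ⇑(hB.eigenvectorBasis l) ⬝ᵥ ⇑(hB.eigenvectorBasis l) = (1 : ℂ) := by
  have h1 : ‖hB.eigenvectorBasis l‖ = 1 := hB.eigenvectorBasis.orthonormal.1 l
  have h2 := inner_self_eq_norm_sq_to_K (𝕜 := ℂ) (hB.eigenvectorBasis l)
  rw [EuclideanSpace.inner_eq_star_dotProduct] at h2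
  rw [dotProduct_comm]
  simpa [h1] using h2

lemma aux_eig_le_one {B : Matrix n n ℂ} (hB : B.IsHermitian) (h1 : (1 - B).PosSemidef) (l : n) :
    hB.eigenvalues l ≤ 1 := by
  have hv := h1.re_dotProduct_nonneg ⇑(hB.eigenvectorBasis l)
  rw [sub_mulVec, one_mulVec, dotProduct_sub, map_sub] at hv
  have he := hB.eigenvalues_eq l
  rw [aux_dot_self_eig hB l] at hv
  rw [← he] at hv
  simp only [RCLike.one_re] at hv
  linarith

lemma aux_eig01 {Q : Matrix n n ℂ} (hQ : Q.IsHermitian) (h2 : Q * Q = Q) (l : n) :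
    hQ.eigenvalues l = 0 ∨ hQ.eigenvalues l = 1 := by
  obtain ⟨U, hUU, hD⟩ : ∃ U : Matrix n n ℂ, U * star U = 1 ∧
      star U * Q * U = diagonal (RCLike.ofReal ∘ hQ.eigenvalues) :=
    ⟨hQ.eigenvectorUnitary, mem_unitaryGroup_iff.mp hQ.eigenvectorUnitary.2,
      by simpa [Unitary.conjStarAlgAut_apply] using hQ.conjStarAlgAut_star_eigenvectorUnitary⟩
  have hDD : (diagonal (RCLike.ofReal ∘ hQ.eigenvalues) : Matrix n n ℂ) *
        diagonal (RCLike.ofReal ∘ hQ.eigenvalues)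
      = diagonal (RCLike.ofReal ∘ hQ.eigenvalues) := by
    rw [← hD]
    calc (star U * Q * U) * (star U * Q * U)
        = star U * (Q * ((U * star U) * (Q * U))) := by simp only [Matrix.mul_assoc]
      _ = star U * Q * U := by
          rw [hUU, Matrix.one_mul]
          simp only [← Matrix.mul_assoc]
          rw [Matrix.mul_assoc (star U) Q Q, h2]
  rw [diagonal_mul_diagonal] at hDD
  have h := congr_fun (congr_fun hDD l) l
  simp only [diagonal_apply_eq, Pi.mul_apply, Function.comp_apply] at h
  have h' : hQ.eigenvalues l * hQ.eigenvalues l = hQ.eigenvalues l := by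
    exact_mod_cast h
  rcases eq_or_ne (hQ.eigenvalues l) 0 with h0 | h0
  · exact Or.inl h0
  · exact Or.inr (mul_left_cancel₀ h0 (by rw [h', mul_one]))

lemma aux_trace_eq_sum_eig {Q : Matrix n n ℂ} (hQ : Q.IsHermitian) :
    Q.trace = ∑ l, (hQ.eigenvalues l : ℂ) := by
  conv_lhs => rw [hQ.spectral_theorem, Unitary.conjStarAlgAut_apply]
  rw [Matrix.trace_mul_cycle, mem_unitaryGroup_iff'.mp hQ.eigenvectorUnitary.2, Matrix.one_mul,
    Matrix.trace_diagonal]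
  rfl

lemma aux_trace_eq_rank {Q : Matrix n n ℂ} (hQ : Q.IsHermitian) (h2 : Q * Q = Q) :
    Q.trace = (Q.rank : ℂ) := by
  rw [aux_trace_eq_sum_eig hQ, hQ.rank_eq_card_non_zero_eigs]
  have : ∀ l, ((hQ.eigenvalues l : ℂ)) = if hQ.eigenvalues l ≠ 0 then 1 else 0 := by
    intro l
    rcases aux_eig01 hQ h2 l with h | h <;> simp [h]
  rw [Finset.sum_congr rfl fun l _ => this l, Finset.sum_boole, Fintype.card_subtype]

lemma aux_trace_conj (A U : Matrix n n ℂ) (d : n → ℂ) :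
    (A * (U * diagonal d * star U)).trace = ∑ l, (star U * A * U) l l * d l := by
  have h1 : A * (U * diagonal d * star U) = (A * U * diagonal d) * star U := by
    simp only [Matrix.mul_assoc]
  rw [h1, Matrix.trace_mul_comm]
  have h2 : star U * (A * U * diagonal d) = (star U * A * U) * diagonal d := by
    simp only [Matrix.mul_assoc]
  rw [h2, Matrix.trace]
  simp [Matrix.mul_diagonal]

end Aux

section Hyp

variable {ι : Type*} [Fintype ι] [DecidableEq ι]

lemma aux_base (k : ℕ) (x : ι → ℝ) (h01 : ∀ t, x t = 0 ∨ x t = 1) (hs : ∑ t, x t = k) :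
    x ∈ {y : ι → ℝ | ∃ S : Finset ι, S.card = k ∧ y = fun t => if t ∈ S then (1:ℝ) else 0} := by
  refine ⟨Finset.univ.filter (fun t => x t = 1), ?_, ?_⟩
  · have h : ∑ t, x t = ((Finset.univ.filter fun t => x t = 1).card : ℝ) := by
      rw [← Finset.sum_boole]
      exact Finset.sum_congr rfl fun t _ => by rcases h01 t with h | h <;> simp [h]
    rw [hs] at h
    exact_mod_cast h.symm
  · funext t
    rcases h01 t with h | h <;> simp [h]

lemma aux_hypersimplex (k : ℕ) (N : ℕ) :
    ∀ x : ι → ℝ, (Finset.univ.filter fun t => x t ≠ 0 ∧ x t ≠ 1).card ≤ N →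
      (∀ t, 0 ≤ x t) → (∀ t, x t ≤ 1) → (∑ t, x t = k) →
      x ∈ convexHull ℝ
        {y : ι → ℝ | ∃ S : Finset ι, S.card = k ∧ y = fun t => if t ∈ S then (1:ℝ) else 0} := by
  induction N with
  | zero =>
    intro x hc h0 h1 hs
    apply subset_convexHull
    apply aux_base k x _ hs
    intro t
    by_contra hcon
    push_neg at hcon
    have : t ∈ Finset.univ.filter fun t => x t ≠ 0 ∧ x t ≠ 1 :=
      Finset.mem_filter.2 ⟨Finset.mem_univ t, hcon⟩
    have := Finset.card_pos.2 ⟨t, this⟩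
    omega
  | succ N ih =>
    intro x hc h0 h1 hs
    set F := Finset.univ.filter fun t => x t ≠ 0 ∧ x t ≠ 1 with hF
    by_cases hF0 : F = ∅
    · apply subset_convexHull
      apply aux_base k x _ hs
      intro t
      by_contra hcon
      push_neg at hcon
      have : t ∈ F := Finset.mem_filter.2 ⟨Finset.mem_univ t, hcon⟩
      simp [hF0] at this
    · obtain ⟨t, ht⟩ := Finset.nonempty_of_ne_empty hF0
      have hxt := (Finset.mem_filter.1 ht).2
      have h0t : 0 < x t := (h0 t).lt_of_ne (Ne.symm hxt.1)
      have h1t : x t < 1 := (h1 t).lt_of_ne hxt.2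
      have hex : ∃ s, s ∈ F ∧ s ≠ t := by
        by_contra hcon
        push_neg at hcon
        have h01 : ∀ u, u ≠ t → x u = 0 ∨ x u = 1 := by
          intro u hu
          by_contra hc'
          push_neg at hc'
          exact hu (hcon u (Finset.mem_filter.2 ⟨Finset.mem_univ u, hc'⟩))
        have hsum : ∑ u ∈ Finset.univ.erase t, x u
            = (((Finset.univ.erase t).filter (fun u => x u = 1)).card : ℝ) := by
          rw [← Finset.sum_boole]
          exact Finset.sum_congr rfl fun u hu => by
            rcases h01 u (Finset.ne_of_mem_erase hu) with h | h <;> simp [h]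
        have htot : x t + ∑ u ∈ Finset.univ.erase t, x u = (k : ℝ) := by
          rw [Finset.add_sum_erase _ x (Finset.mem_univ t), hs]
        set c := ((Finset.univ.erase t).filter (fun u => x u = 1)).card with hcdef
        rw [hsum] at htot
        rcases lt_or_ge c k with h' | h'
        · have : (c : ℝ) + 1 ≤ k := by exact_mod_cast h'
          linarith
        · have : (k : ℝ) ≤ c := by exact_mod_cast h'
          linarith
      obtain ⟨s, hsF, hst⟩ := hex
      have hxs := (Finset.mem_filter.1 hsF).2
      have h0s : 0 < x s := (h0 s).lt_of_ne (Ne.symm hxs.1)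
      have h1s : x s < 1 := (h1 s).lt_of_ne hxs.2
      set ε := min (1 - x t) (x s) with hε
      set δ := min (x t) (1 - x s) with hδ
      have hε0 : 0 < ε := lt_min (by linarith) h0s
      have hδ0 : 0 < δ := lt_min h0t (by linarith)
      set y : ι → ℝ := fun u => x u + (if u = t then ε else if u = s then -ε else 0) with hy
      set z : ι → ℝ := fun u => x u + (if u = t then -δ else if u = s then δ else 0) with hz
      have hts : ¬ (t = s) := fun h => hst h.symm
      have hitesum : ∀ a b : ℝ, ∑ u : ι, (if u = t then a else if u = s then b else 0) = a + b := by
        intro a b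
        have : ∀ u : ι, (if u = t then a else if u = s then b else 0)
            = (if u = t then a else 0) + (if u = s then b else 0) := by
          intro u
          by_cases h1' : u = t <;> by_cases h2' : u = s <;>
            simp_all
        rw [Finset.sum_congr rfl fun u _ => this u, Finset.sum_add_distrib,
          Finset.sum_ite_eq' Finset.univ t (fun _ => a), Finset.sum_ite_eq' Finset.univ s fun _ => b]
        simp
      have hsy : ∑ u, y u = (k : ℝ) := by
        rw [hy]
        simp only [Finset.sum_add_distrib, hs, hitesum]
        ring
      have hsz : ∑ u, z u = (k : ℝ) := by
        rw [hz]
        simp only [Finset.sum_add_distrib, hs, hitesum]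
        ring
      have hεs : ε ≤ x s := min_le_right _ _
      have hεt : ε ≤ 1 - x t := min_le_left _ _
      have hδt : δ ≤ x t := min_le_left _ _
      have hδs : δ ≤ 1 - x s := min_le_right _ _
      have h0y : ∀ u, 0 ≤ y u := by
        intro u
        rw [hy]
        dsimp only
        by_cases h1' : u = t
        · subst h1'; simp [hts]; linarith
        · by_cases h2' : u = s
          · subst h2'; simp [h1']; linarith
          · simp [h1', h2']; exact h0 u
      have h1y : ∀ u, y u ≤ 1 := by
        intro u
        rw [hy]
        dsimp only
        by_cases h1' : u = t
        · subst h1'; simp [hts]; linarith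
        · by_cases h2' : u = s
          · subst h2'; simp [h1']; linarith
          · simp [h1', h2']; exact h1 u
      have h0z : ∀ u, 0 ≤ z u := by
        intro u
        rw [hz]
        dsimp only
        by_cases h1' : u = t
        · subst h1'; simp [hts]; linarith
        · by_cases h2' : u = s
          · subst h2'; simp [h1']; linarith
          · simp [h1', h2']; exact h0 u
      have h1z : ∀ u, z u ≤ 1 := by
        intro u
        rw [hz]
        dsimp only
        by_cases h1' : u = t
        · subst h1'; simp [hts]; linarith
        · by_cases h2' : u = s
          · subst h2'; simp [h1']; linarith
          · simp [h1', h2']; exact h1 u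
      have hFy : (Finset.univ.filter fun u => y u ≠ 0 ∧ y u ≠ 1).card ≤ N := by
        set w : ι := if 1 - x t ≤ x s then t else s with hw
        have hwF : w ∈ F := by rw [hw]; split <;> assumption
        have hsub : (Finset.univ.filter fun u => y u ≠ 0 ∧ y u ≠ 1) ⊆ F.erase w := by
          intro u hu
          have hu' := (Finset.mem_filter.1 hu).2
          rw [Finset.mem_erase]
          by_cases h1' : u = t
          · by_cases hcase : 1 - x t ≤ x s
            · exfalso
              apply hu'.2
              simp only [hy]
              rw [if_pos h1', h1', hε, min_eq_left hcase]
              ring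
            · rw [h1']
              exact ⟨by rw [hw, if_neg hcase]; exact hst.symm, ht⟩
          · by_cases h2' : u = s
            · by_cases hcase : 1 - x t ≤ x s
              · rw [h2']
                exact ⟨by rw [hw, if_pos hcase]; exact hst, hsF⟩
              · exfalso
                apply hu'.1
                simp only [hy]
                rw [if_neg h1', if_pos h2', h2', hε, min_eq_right (le_of_not_ge hcase)]
                ring
            · constructor
              · intro h; rw [hw] at h; revert h; split <;> intro h <;> [exact h1' h; exact h2' h]
              · refine Finset.mem_filter.2 ⟨Finset.mem_univ u, ?_⟩
                have : y u = x u := by rw [hy]; simp [h1', h2']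
                rw [← this]; exact hu'
        calc (Finset.univ.filter fun u => y u ≠ 0 ∧ y u ≠ 1).card
            ≤ (F.erase w).card := Finset.card_le_card hsub
          _ = F.card - 1 := Finset.card_erase_of_mem hwF
          _ ≤ N := by omega
      have hFz : (Finset.univ.filter fun u => z u ≠ 0 ∧ z u ≠ 1).card ≤ N := by
        set w : ι := if x t ≤ 1 - x s then t else s with hw
        have hwF : w ∈ F := by rw [hw]; split <;> assumption
        have hsub : (Finset.univ.filter fun u => z u ≠ 0 ∧ z u ≠ 1) ⊆ F.erase w := by
          intro u hu
          have hu' := (Finset.mem_filter.1 hu).2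
          rw [Finset.mem_erase]
          by_cases h1' : u = t
          · by_cases hcase : x t ≤ 1 - x s
            · exfalso
              apply hu'.1
              simp only [hz]
              rw [if_pos h1', h1', hδ, min_eq_left hcase]
              ring
            · rw [h1']
              exact ⟨by rw [hw, if_neg hcase]; exact hst.symm, ht⟩
          · by_cases h2' : u = s
            · by_cases hcase : x t ≤ 1 - x s
              · rw [h2']
                exact ⟨by rw [hw, if_pos hcase]; exact hst, hsF⟩
              · exfalso
                apply hu'.2
                simp only [hz]
                rw [if_neg h1', if_pos h2', h2', hδ, min_eq_right (le_of_not_ge hcase)]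
                ring
            · constructor
              · intro h; rw [hw] at h; revert h; split <;> intro h <;> [exact h1' h; exact h2' h]
              · refine Finset.mem_filter.2 ⟨Finset.mem_univ u, ?_⟩
                have : z u = x u := by rw [hz]; simp [h1', h2']
                rw [← this]; exact hu'
        calc (Finset.univ.filter fun u => z u ≠ 0 ∧ z u ≠ 1).card
            ≤ (F.erase w).card := Finset.card_le_card hsub
          _ = F.card - 1 := Finset.card_erase_of_mem hwF
          _ ≤ N := by omega
      have hyc := ih y hFy h0y h1y hsy
      have hzc := ih z hFz h0z h1z hsz
      have hsum_pos : 0 < ε + δ := by linarith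
      have hxcomb : x = (δ / (ε + δ)) • y + (ε / (ε + δ)) • z := by
        funext u
        simp only [Pi.add_apply, Pi.smul_apply, smul_eq_mul, hy, hz]
        by_cases h1' : u = t
        · subst h1'; simp [hts]; field_simp; ring
        · by_cases h2' : u = s
          · subst h2'; simp [h1']; field_simp; ring
          · simp [h1', h2']; field_simp; ring
      rw [hxcomb]
      exact (convex_convexHull ℝ _) hyc hzc (by positivity) (by positivity)
        (by field_simp; ring)

end Hyp

lemma aux_trace_bd_mul {r : ℕ} {ns : Fin r → ℕ}
    (M : ∀ i, Matrix (Fin (ns i)) (Fin (ns i)) ℂ)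
    (N : Matrix ((i : Fin r) × Fin (ns i)) ((i : Fin r) × Fin (ns i)) ℂ) :
    (blockDiagonal' M * N).trace
      = ∑ i, (M i * N.submatrix (Sigma.mk i) (Sigma.mk i)).trace := by
  rw [Matrix.trace, ← Finset.univ_sigma_univ, Finset.sum_sigma]
  apply Finset.sum_congr rfl
  intro i _
  rw [Matrix.trace]
  apply Finset.sum_congr rfl
  intro l _
  rw [Matrix.diag_apply, Matrix.diag_apply, Matrix.mul_apply, Matrix.mul_apply,
    ← Finset.univ_sigma_univ, Finset.sum_sigma]
  rw [Finset.sum_eq_single_of_mem i (Finset.mem_univ i)]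
  · apply Finset.sum_congr rfl
    intro l' _
    rw [Matrix.blockDiagonal'_apply_eq]
    rfl
  · intro i' _ hne
    apply Finset.sum_eq_zero
    intro l' _
    rw [Matrix.blockDiagonal'_apply_ne _ _ _ (Ne.symm hne)]
    exact zero_mul _

theorem stmt_14 {r m : ℕ} (hr : 0 < r) (hm : 0 < m)
    (ns : Fin r → ℕ) (hns : ∀ i, 0 < ns i)
    (Ablk : Fin m → ∀ i : Fin r, Matrix (Fin (ns i)) (Fin (ns i)) ℂ)
    (hHerm : ∀ j i, (Ablk j i).IsHermitian)
    (A : Fin m → Matrix ((i : Fin r) × Fin (ns i)) ((i : Fin r) × Fin (ns i)) ℂ)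
    (hA : ∀ j, A j = Matrix.blockDiagonal' (Ablk j))
    (k : ℕ) (hk1 : 1 ≤ k) (hk2 : k ≤ (∑ i, ns i) - 1)
    (W : Set (Fin m → ℝ))
    (hW : W = ⋃ κ ∈ { κ : Fin r → ℕ | ∑ i, κ i = k },
      { p : Fin m → ℝ | ∃ q : Fin r → Fin m → ℝ,
        (∀ i, q i ∈ jointKNumRangeR (κ i) (fun j => Ablk j i)) ∧ p = ∑ i, q i }) :
    jointKNumRangeR k A ⊆ convexHull ℝ W ∧
      convexHull ℝ W = convexHull ℝ (jointKNumRangeR k A) := by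
  classical
  -- Easy inclusion : W ⊆ W_k(A)
  have hWsub : W ⊆ jointKNumRangeR k A := by
    rw [hW]
    intro p hp
    simp only [Set.mem_iUnion, Set.mem_setOf_eq] at hp
    obtain ⟨κ, hκ, q, hq, rfl⟩ := hp
    choose Pb hPbH hPbI hPbR hPbT using hq
    have hbdH : (blockDiagonal' Pb).IsHermitian := by
      show (blockDiagonal' Pb)ᴴ = blockDiagonal' Pb
      rw [Matrix.blockDiagonal'_conjTranspose,
        show (fun i => (Pb i)ᴴ) = Pb from funext fun i => (hPbH i).eq]
    have hbdI : blockDiagonal' Pb * blockDiagonal' Pb = blockDiagonal' Pb := by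
      rw [← Matrix.blockDiagonal'_mul,
        show (fun i => Pb i * Pb i) = Pb from funext fun i => hPbI i]
    have htrb : ∀ i, (Pb i).trace = (κ i : ℂ) := by
      intro i
      rw [aux_trace_eq_rank (hPbH i) (hPbI i), hPbR i]
    have htr : (blockDiagonal' Pb).trace = (k : ℂ) := by
      rw [Matrix.trace_blockDiagonal', Finset.sum_congr rfl fun i _ => htrb i]
      exact_mod_cast congrArg (Nat.cast : ℕ → ℂ) hκ
    refine ⟨blockDiagonal' Pb, hbdH, hbdI, ?_, ?_⟩
    · have h1 := aux_trace_eq_rank hbdH hbdI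
      rw [htr] at h1
      exact_mod_cast h1.symm
    · intro j
      rw [hA j, aux_trace_bd_mul]
      have hsubm : ∀ i, (blockDiagonal' Pb).submatrix (Sigma.mk i) (Sigma.mk i) = Pb i := by
        intro i
        ext l l'
        simp [Matrix.submatrix_apply, Matrix.blockDiagonal'_apply_eq]
      calc (((∑ i, q i) j : ℝ) : ℂ) = ((∑ i, q i j : ℝ) : ℂ) := by rw [Finset.sum_apply]
        _ = ∑ i, ((q i j : ℝ) : ℂ) := by push_cast; rfl
        _ = ∑ i, (Ablk j i * Pb i).trace := Finset.sum_congr rfl fun i _ => hPbT i j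
        _ = ∑ i, (Ablk j i * (blockDiagonal' Pb).submatrix (Sigma.mk i) (Sigma.mk i)).trace := by
            exact Finset.sum_congr rfl fun i _ => by rw [hsubm i]
  -- Hard inclusion : W_k(A) ⊆ conv W
  have hmain : jointKNumRangeR k A ⊆ convexHull ℝ W := by
    rintro p ⟨P, hPH, hPI, hPR, hPT⟩
    have hBH : ∀ i, (P.submatrix (Sigma.mk i) (Sigma.mk i)).IsHermitian := by
      intro i
      show (P.submatrix (Sigma.mk i) (Sigma.mk i))ᴴ = P.submatrix (Sigma.mk i) (Sigma.mk i)
      rw [Matrix.conjTranspose_submatrix, hPH.eq]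
    have hPsd : P.PosSemidef := by
      have h := Matrix.posSemidef_conjTranspose_mul_self P
      rwa [hPH.eq, hPI] at h
    have hQH : (1 - P).IsHermitian := Matrix.isHermitian_one.sub hPH
    have hQI : (1 - P) * (1 - P) = 1 - P := by
      rw [sub_mul, one_mul, mul_sub, mul_one, hPI]
      abel
    have hQsd : (1 - P).PosSemidef := by
      have h := Matrix.posSemidef_conjTranspose_mul_self (1 - P)
      rwa [hQH.eq, hQI] at h
    have hBsd : ∀ i, (P.submatrix (Sigma.mk i) (Sigma.mk i)).PosSemidef :=
      fun i => hPsd.submatrix _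
    have hsub1 : ∀ i : Fin r, (1 - P).submatrix (Sigma.mk i) (Sigma.mk i)
        = 1 - P.submatrix (Sigma.mk i) (Sigma.mk i) := by
      intro i
      ext l l'
      simp only [Matrix.submatrix_apply, Matrix.sub_apply]
      congr 1
      by_cases h : l = l'
      · subst h; simp
      · rw [Matrix.one_apply_ne h, Matrix.one_apply_ne]
        intro hcon
        exact h (eq_of_heq (Sigma.mk.inj_iff.mp hcon).2)
    have h1Bsd : ∀ i, ((1 : Matrix (Fin (ns i)) (Fin (ns i)) ℂ)
        - P.submatrix (Sigma.mk i) (Sigma.mk i)).PosSemidef := by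
      intro i
      have h := hQsd.submatrix (Sigma.mk i)
      rwa [hsub1 i] at h
    set lam : ((i : Fin r) × Fin (ns i)) → ℝ := fun t => (hBH t.1).eigenvalues t.2 with hlam
    have hlam0 : ∀ t, 0 ≤ lam t := fun t => (hBsd t.1).eigenvalues_nonneg t.2
    have hlam1 : ∀ t, lam t ≤ 1 := fun t => aux_eig_le_one (hBH t.1) (h1Bsd t.1) t.2
    have htrP : P.trace = (k : ℂ) := by
      rw [aux_trace_eq_rank hPH hPI, hPR]
    have htrsplit : P.trace = ∑ i, (P.submatrix (Sigma.mk i) (Sigma.mk i)).trace := by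
      rw [Matrix.trace, ← Finset.univ_sigma_univ, Finset.sum_sigma]
      rfl
    have hsumlam : ∑ t, lam t = (k : ℝ) := by
      have h : ((∑ t, lam t : ℝ) : ℂ) = (k : ℂ) := by
        calc ((∑ t, lam t : ℝ) : ℂ)
            = ∑ t : ((i : Fin r) × Fin (ns i)), ((lam t : ℝ) : ℂ) := by push_cast; rfl
          _ = ∑ i, ∑ l, ((hBH i).eigenvalues l : ℂ) := by
              rw [← Finset.univ_sigma_univ, Finset.sum_sigma]
          _ = ∑ i, (P.submatrix (Sigma.mk i) (Sigma.mk i)).trace :=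
              Finset.sum_congr rfl fun i _ => (aux_trace_eq_sum_eig (hBH i)).symm
          _ = P.trace := htrsplit.symm
          _ = (k : ℂ) := htrP
      exact_mod_cast h
    set c : ((i : Fin r) × Fin (ns i)) → (Fin m → ℝ) :=
      fun t j => ((star ((hBH t.1).eigenvectorUnitary : Matrix (Fin (ns t.1)) (Fin (ns t.1)) ℂ)
        * Ablk j t.1 * ((hBH t.1).eigenvectorUnitary : Matrix (Fin (ns t.1)) (Fin (ns t.1)) ℂ))
          t.2 t.2).re with hcdef
    have hcast : ∀ (t : (i : Fin r) × Fin (ns i)) (j : Fin m), ((c t j : ℝ) : ℂ)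
        = (star ((hBH t.1).eigenvectorUnitary : Matrix (Fin (ns t.1)) (Fin (ns t.1)) ℂ)
          * Ablk j t.1 * ((hBH t.1).eigenvectorUnitary : Matrix (Fin (ns t.1)) (Fin (ns t.1)) ℂ))
            t.2 t.2 := by
      intro t j
      have hher : (star ((hBH t.1).eigenvectorUnitary : Matrix (Fin (ns t.1)) (Fin (ns t.1)) ℂ)
          * Ablk j t.1
          * ((hBH t.1).eigenvectorUnitary : Matrix (Fin (ns t.1)) (Fin (ns t.1)) ℂ)).IsHermitian := by
        have h := Matrix.isHermitian_conjTranspose_mul_mul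
          ((hBH t.1).eigenvectorUnitary : Matrix (Fin (ns t.1)) (Fin (ns t.1)) ℂ) (hHerm j t.1)
        rwa [← Matrix.star_eq_conjTranspose] at h
      have h2 := congr_fun (congr_fun hher.eq t.2) t.2
      rw [Matrix.conjTranspose_apply, Complex.star_def] at h2
      exact Complex.conj_eq_iff_re.mp h2
    have hblocktr : ∀ (i : Fin r) (j : Fin m),
        (Ablk j i * P.submatrix (Sigma.mk i) (Sigma.mk i)).trace
        = ∑ l, (star ((hBH i).eigenvectorUnitary : Matrix (Fin (ns i)) (Fin (ns i)) ℂ)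
            * Ablk j i * ((hBH i).eigenvectorUnitary : Matrix (Fin (ns i)) (Fin (ns i)) ℂ)) l l
            * ((hBH i).eigenvalues l : ℂ) := by
      intro i j
      conv_lhs => rw [(hBH i).spectral_theorem, Unitary.conjStarAlgAut_apply]
      rw [aux_trace_conj]
      rfl
    have hpkey : p = ∑ t, lam t • c t := by
      funext j
      have h1 : ((p j : ℝ) : ℂ)
          = ∑ t : ((i : Fin r) × Fin (ns i)), (lam t : ℂ) * ((c t j : ℝ) : ℂ) := by
        rw [hPT j, hA j, aux_trace_bd_mul, ← Finset.univ_sigma_univ, Finset.sum_sigma]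
        apply Finset.sum_congr rfl
        intro i _
        rw [hblocktr i j]
        apply Finset.sum_congr rfl
        intro l _
        rw [← hcast ⟨i, l⟩ j]
        exact mul_comm _ _
      have h2 : (((∑ t, lam t • c t) j : ℝ) : ℂ)
          = ∑ t : ((i : Fin r) × Fin (ns i)), (lam t : ℂ) * ((c t j : ℝ) : ℂ) := by
        have h3 : (∑ t, lam t • c t) j = ∑ t, lam t * c t j := by
          rw [Finset.sum_apply]
          exact Finset.sum_congr rfl fun t _ => rfl
        rw [h3]
        push_cast
        rfl
      have := h1.trans h2.symm
      exact_mod_cast this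
    have hlconv := aux_hypersimplex (ι := (i : Fin r) × Fin (ns i)) k _ lam le_rfl hlam0 hlam1
      hsumlam
    set L : (((i : Fin r) × Fin (ns i)) → ℝ) →ₗ[ℝ] (Fin m → ℝ) :=
      { toFun := fun x => ∑ t, x t • c t
        map_add' := by
          intro a b
          simp only [Pi.add_apply, add_smul]
          rw [Finset.sum_add_distrib]
        map_smul' := by
          intro rr a
          simp only [Pi.smul_apply, smul_eq_mul, RingHom.id_apply]
          rw [Finset.smul_sum]
          exact Finset.sum_congr rfl fun t _ => (smul_smul rr (a t) (c t)).symm } with hLdef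
    have hpmem : p ∈ convexHull ℝ
        (L '' {y : ((i : Fin r) × Fin (ns i)) → ℝ |
          ∃ S : Finset ((i : Fin r) × Fin (ns i)), S.card = k
            ∧ y = fun t => if t ∈ S then (1:ℝ) else 0}) := by
      rw [← L.image_convexHull]
      exact ⟨lam, hlconv, hpkey.symm⟩
    have hvert : L '' {y : ((i : Fin r) × Fin (ns i)) → ℝ |
        ∃ S : Finset ((i : Fin r) × Fin (ns i)), S.card = k
          ∧ y = fun t => if t ∈ S then (1:ℝ) else 0} ⊆ W := by
      rintro _ ⟨y, ⟨S, hScard, rfl⟩, rfl⟩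
      rw [hW]
      simp only [Set.mem_iUnion, Set.mem_setOf_eq]
      refine ⟨fun i => (Finset.univ.filter
        fun l => (⟨i, l⟩ : (i : Fin r) × Fin (ns i)) ∈ S).card, ?_, ?_⟩
      · -- ∑ κ = k
        rw [← hScard]
        have h1 : S.card = ∑ t : ((i : Fin r) × Fin (ns i)), if t ∈ S then 1 else 0 := by
          rw [Finset.sum_boole]
          simp
        rw [h1, ← Finset.univ_sigma_univ, Finset.sum_sigma]
        exact Finset.sum_congr rfl fun i _ => by rw [Finset.sum_boole]; simp
      · refine ⟨fun i j => ∑ l ∈ Finset.univ.filter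
          (fun l => (⟨i, l⟩ : (i : Fin r) × Fin (ns i)) ∈ S), c ⟨i, l⟩ j, ?_, ?_⟩
        · intro i
          set Ui : Matrix (Fin (ns i)) (Fin (ns i)) ℂ :=
            ((hBH i).eigenvectorUnitary : Matrix (Fin (ns i)) (Fin (ns i)) ℂ) with hUidef
          have hUU' : star Ui * Ui = 1 := mem_unitaryGroup_iff'.mp (hBH i).eigenvectorUnitary.2
          set χ : Fin (ns i) → ℂ :=
            fun l => if (⟨i, l⟩ : (i : Fin r) × Fin (ns i)) ∈ S then 1 else 0 with hχ
          have hχstar : star χ = χ := by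
            funext l
            rw [hχ]
            simp only [Pi.star_apply]
            split <;> simp
          have hχsq : χ * χ = χ := by
            funext l
            rw [hχ]
            simp only [Pi.mul_apply]
            split <;> simp
          have hPiH : (Ui * diagonal χ * star Ui).IsHermitian := by
            show _ᴴ = _
            simp only [Matrix.conjTranspose_mul, Matrix.diagonal_conjTranspose, hχstar,
              Matrix.star_eq_conjTranspose, Matrix.conjTranspose_conjTranspose, Matrix.mul_assoc]
          have hPiI : (Ui * diagonal χ * star Ui) * (Ui * diagonal χ * star Ui)
              = Ui * diagonal χ * star Ui := by
            calc (Ui * diagonal χ * star Ui) * (Ui * diagonal χ * star Ui)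
                = Ui * diagonal χ * ((star Ui * Ui) * (diagonal χ * star Ui)) := by
                  simp only [Matrix.mul_assoc]
              _ = Ui * diagonal χ * star Ui := by
                  rw [hUU', Matrix.one_mul]
                  simp only [← Matrix.mul_assoc]
                  rw [Matrix.mul_assoc Ui (diagonal χ) (diagonal χ),
                    Matrix.diagonal_mul_diagonal,
                    show (fun l => χ l * χ l) = χ from funext fun l => congr_fun hχsq l]
          have htrPi : (Ui * diagonal χ * star Ui).trace
              = (((Finset.univ.filter
                  fun l => (⟨i, l⟩ : (i : Fin r) × Fin (ns i)) ∈ S).card : ℕ) : ℂ) := by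
            rw [Matrix.trace_mul_cycle, hUU', Matrix.one_mul, Matrix.trace_diagonal]
            simp only [hχ]
            rw [Finset.sum_boole]
          refine ⟨Ui * diagonal χ * star Ui, hPiH, hPiI, ?_, ?_⟩
          · have h1 := aux_trace_eq_rank hPiH hPiI
            rw [htrPi] at h1
            exact_mod_cast h1.symm
          · intro j
            rw [aux_trace_conj (Ablk j i) Ui χ]
            have h4 : ∑ l, (star Ui * Ablk j i * Ui) l l * χ l
                = ∑ l ∈ Finset.univ.filter
                    (fun l => (⟨i, l⟩ : (i : Fin r) × Fin (ns i)) ∈ S), ((c ⟨i, l⟩ j : ℝ) : ℂ) := by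
              rw [Finset.sum_filter]
              apply Finset.sum_congr rfl
              intro l _
              simp only [hχ]
              by_cases hmem : (⟨i, l⟩ : (i : Fin r) × Fin (ns i)) ∈ S
              · rw [if_pos hmem, if_pos hmem, mul_one, hcast ⟨i, l⟩ j]
              · simp [hmem]
            rw [h4]
            push_cast
            rfl
        · funext j
          rw [Finset.sum_apply]
          show (∑ t, (if t ∈ S then (1:ℝ) else 0) • c t) j
            = ∑ i, ∑ l ∈ Finset.univ.filter
                (fun l => (⟨i, l⟩ : (i : Fin r) × Fin (ns i)) ∈ S), c ⟨i, l⟩ j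
          rw [Finset.sum_apply]
          have h5 : ∀ t : ((i : Fin r) × Fin (ns i)),
              ((if t ∈ S then (1:ℝ) else 0) • c t) j = if t ∈ S then c t j else 0 := by
            intro t
            split <;> simp
          rw [Finset.sum_congr rfl fun t _ => h5 t, ← Finset.univ_sigma_univ, Finset.sum_sigma]
          exact Finset.sum_congr rfl fun i _ => by rw [Finset.sum_filter]
    exact convexHull_mono hvert hpmem
  refine ⟨hmain, Set.Subset.antisymm ?_ ?_⟩
  · exact convexHull_mono hWsub
  · exact convexHull_min hmain (convex_convexHull ℝ W)
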